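/- The functional ‖f‖_{p-TV,[a,b]} := (sup_{δ>0} δ^{p−1} TV(f,[a,b],δ))^{1/p} satisfies the triangle inequality: for all f, h : [a,b] → W with finite such norm, ‖f + h‖_{p-TV,[a,b]} ≤ ‖f‖_{p-TV,[a,b]} + ‖h‖_{p-TV,[a,b]}. -/

import Mathlib

open Set Filter Topology ENNReal

noncomputable def truncVar {E : Type*} [PseudoMetricSpace E] (f : ℝ → E) (a b δ : ℝ) : ℝ≥0∞ :=
  ⨆ (n : ℕ) (t : Fin (n + 1) → ℝ) (_ : StrictMono t) (_ : ∀ i, t i ∈ Set.Icc a b),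
    ENNReal.ofReal (∑ i : Fin n, max (dist (f (t i.succ)) (f (t i.castSucc)) - δ) 0)

def Regulated {E : Type*} [PseudoMetricSpace E] (f : ℝ → E) (a b : ℝ) : Prop :=
  (∀ t ∈ Set.Ico a b, ∃ L, Filter.Tendsto f (nhdsWithin t (Set.Ioi t)) (nhds L)) ∧
  (∀ t ∈ Set.Ioc a b, ∃ L, Filter.Tendsto f (nhdsWithin t (Set.Iio t)) (nhds L))

noncomputable def pTVsup {W : Type*} [NormedAddCommGroup W] (f : ℝ → W) (a b p : ℝ) : ℝ≥0∞ :=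
  ⨆ (δ : ℝ) (_ : 0 < δ), ENNReal.ofReal (δ ^ (p - 1)) * truncVar f a b δ

noncomputable def pTVnorm {W : Type*} [NormedAddCommGroup W] (f : ℝ → W) (a b p : ℝ) : ℝ≥0∞ :=
  pTVsup f a b p ^ (1 / p)

section Aux

variable {E : Type*} [PseudoMetricSpace E] {W : Type*} [NormedAddCommGroup W]

lemma ofReal_partial_le_truncVar (f : ℝ → E) (a b δ : ℝ) {n : ℕ} (t : Fin (n + 1) → ℝ)
    (hmono : StrictMono t) (hmem : ∀ i, t i ∈ Set.Icc a b) :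
    ENNReal.ofReal (∑ i : Fin n, max (dist (f (t i.succ)) (f (t i.castSucc)) - δ) 0)
      ≤ truncVar f a b δ :=
  le_iSup_of_le n (le_iSup_of_le t (le_iSup_of_le hmono (le_iSup_of_le hmem le_rfl)))

lemma mul_truncVar_le_pTVsup (f : ℝ → W) (a b p : ℝ) {δ : ℝ} (hδ : 0 < δ) :
    ENNReal.ofReal (δ ^ (p - 1)) * truncVar f a b δ ≤ pTVsup f a b p :=
  le_iSup_of_le δ (le_iSup_of_le hδ le_rfl)

lemma truncVar_add_le (f h : ℝ → W) (a b δ₁ δ₂ : ℝ) :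
    truncVar (fun t => f t + h t) a b (δ₁ + δ₂) ≤ truncVar f a b δ₁ + truncVar h a b δ₂ := by
  refine iSup_le fun n => iSup_le fun t => iSup_le fun hmono => iSup_le fun hmem => ?_
  have key : ∑ i : Fin n,
        max (dist ((fun t => f t + h t) (t i.succ)) ((fun t => f t + h t) (t i.castSucc))
          - (δ₁ + δ₂)) 0
      ≤ (∑ i : Fin n, max (dist (f (t i.succ)) (f (t i.castSucc)) - δ₁) 0)
        + ∑ i : Fin n, max (dist (h (t i.succ)) (h (t i.castSucc)) - δ₂) 0 := by
    rw [← Finset.sum_add_distrib]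
    refine Finset.sum_le_sum fun i _ => ?_
    have hd : dist (f (t i.succ) + h (t i.succ)) (f (t i.castSucc) + h (t i.castSucc))
        ≤ dist (f (t i.succ)) (f (t i.castSucc)) + dist (h (t i.succ)) (h (t i.castSucc)) :=
      dist_add_add_le _ _ _ _
    have h1 := le_max_left (dist (f (t i.succ)) (f (t i.castSucc)) - δ₁) 0
    have h2 := le_max_left (dist (h (t i.succ)) (h (t i.castSucc)) - δ₂) 0
    have h3 := le_max_right (dist (f (t i.succ)) (f (t i.castSucc)) - δ₁) 0
    have h4 := le_max_right (dist (h (t i.succ)) (h (t i.castSucc)) - δ₂) 0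
    simp only
    exact max_le (by linarith) (by linarith)
  calc ENNReal.ofReal (∑ i : Fin n,
        max (dist ((fun t => f t + h t) (t i.succ)) ((fun t => f t + h t) (t i.castSucc))
          - (δ₁ + δ₂)) 0)
      ≤ ENNReal.ofReal ((∑ i : Fin n, max (dist (f (t i.succ)) (f (t i.castSucc)) - δ₁) 0)
        + ∑ i : Fin n, max (dist (h (t i.succ)) (h (t i.castSucc)) - δ₂) 0) :=
        ENNReal.ofReal_le_ofReal key
    _ ≤ truncVar f a b δ₁ + truncVar h a b δ₂ := by
        rw [ENNReal.ofReal_add (Finset.sum_nonneg fun i _ => le_max_right _ _)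
          (Finset.sum_nonneg fun i _ => le_max_right _ _)]
        exact add_le_add (ofReal_partial_le_truncVar f a b δ₁ t hmono hmem)
          (ofReal_partial_le_truncVar h a b δ₂ t hmono hmem)

lemma pTVsup_add_le (f h : ℝ → W) (a b p : ℝ) {lam mu : ℝ} (hlam : 0 < lam) (hmu : 0 < mu)
    (hsum : lam + mu = 1) :
    pTVsup (fun t => f t + h t) a b p ≤
      ENNReal.ofReal (lam ^ (1 - p)) * pTVsup f a b p
        + ENNReal.ofReal (mu ^ (1 - p)) * pTVsup h a b p := by
  refine iSup_le fun δ => iSup_le fun hδ => ?_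
  have hδeq : δ = lam * δ + mu * δ := by rw [← add_mul, hsum, one_mul]
  have h1 : truncVar (fun t => f t + h t) a b δ
      ≤ truncVar f a b (lam * δ) + truncVar h a b (mu * δ) := by
    nth_rewrite 1 [hδeq]
    exact truncVar_add_le f h a b _ _
  have factor : ∀ c : ℝ, 0 < c →
      ENNReal.ofReal (δ ^ (p - 1)) = ENNReal.ofReal (c ^ (1 - p)) *
        ENNReal.ofReal ((c * δ) ^ (p - 1)) := by
    intro c hc
    rw [← ENNReal.ofReal_mul (Real.rpow_nonneg hc.le _)]
    congr 1
    rw [Real.mul_rpow hc.le hδ.le, ← mul_assoc, ← Real.rpow_add hc]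
    norm_num
  calc ENNReal.ofReal (δ ^ (p - 1)) * truncVar (fun t => f t + h t) a b δ
      ≤ ENNReal.ofReal (δ ^ (p - 1)) * truncVar f a b (lam * δ)
        + ENNReal.ofReal (δ ^ (p - 1)) * truncVar h a b (mu * δ) := by
        rw [← mul_add]; exact mul_le_mul_right h1 _
    _ ≤ ENNReal.ofReal (lam ^ (1 - p)) * pTVsup f a b p
        + ENNReal.ofReal (mu ^ (1 - p)) * pTVsup h a b p := by
        refine add_le_add ?_ ?_
        · rw [factor lam hlam, mul_assoc]
          exact mul_le_mul_right (mul_truncVar_le_pTVsup f a b p (by positivity)) _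
        · rw [factor mu hmu, mul_assoc]
          exact mul_le_mul_right (mul_truncVar_le_pTVsup h a b p (by positivity)) _

lemma eq_of_pTVsup_eq_zero (f : ℝ → W) (a b p : ℝ) (hS : pTVsup f a b p = 0)
    {s u : ℝ} (hs : s ∈ Set.Icc a b) (hu : u ∈ Set.Icc a b) (hsu : s < u) :
    f u = f s := by
  have key : ∀ δ : ℝ, 0 < δ → dist (f u) (f s) ≤ δ := by
    intro δ hδ
    have h1 : ENNReal.ofReal (δ ^ (p - 1)) * truncVar f a b δ ≤ 0 := by
      rw [← hS]; exact mul_truncVar_le_pTVsup f a b p hδ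
    have h2 : truncVar f a b δ = 0 := by
      rcases mul_eq_zero.mp (le_antisymm h1 zero_le) with h | h
      · exact absurd h (by simp [ENNReal.ofReal_eq_zero, not_le,
          Real.rpow_pos_of_pos hδ (p - 1)])
      · exact h
    have hmono : StrictMono (![s, u] : Fin 2 → ℝ) := by
      intro i j hij
      fin_cases i <;> fin_cases j <;>
        simp_all [Matrix.cons_val_zero, Matrix.cons_val_one]
    have hmem : ∀ i, (![s, u] : Fin 2 → ℝ) i ∈ Set.Icc a b := by
      intro i; fin_cases i <;> simpa
    have h3 := ofReal_partial_le_truncVar f a b δ (![s, u] : Fin 2 → ℝ) hmono hmem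
    rw [h2, nonpos_iff_eq_zero, ENNReal.ofReal_eq_zero, Fin.sum_univ_one] at h3
    have h4 : max (dist (f u) (f s) - δ) 0 ≤ 0 := by
      simpa using h3
    have := le_max_left (dist (f u) (f s) - δ) 0
    linarith
  have hd : dist (f u) (f s) ≤ 0 := by
    by_contra hc
    push_neg at hc
    have := key (dist (f u) (f s) / 2) (by linarith)
    linarith
  exact eq_of_dist_eq_zero (le_antisymm hd dist_nonneg)

lemma pTVsup_add_le_of_left_zero (f h : ℝ → W) (a b p : ℝ) (hf : pTVsup f a b p = 0) :
    pTVsup (fun t => f t + h t) a b p ≤ pTVsup h a b p := by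
  refine iSup_le fun δ => iSup_le fun hδ => ?_
  have h1 : truncVar (fun t => f t + h t) a b δ ≤ truncVar h a b δ := by
    refine iSup_le fun n => iSup_le fun t => iSup_le fun hmono => iSup_le fun hmem => ?_
    have hsum : ∀ i : Fin n,
        dist ((fun t => f t + h t) (t i.succ)) ((fun t => f t + h t) (t i.castSucc))
          = dist (h (t i.succ)) (h (t i.castSucc)) := by
      intro i
      have hfe : f (t i.succ) = f (t i.castSucc) :=
        eq_of_pTVsup_eq_zero f a b p hf (hmem i.castSucc) (hmem i.succ)
          (hmono (Fin.castSucc_lt_succ (i := i)))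
      simp only [hfe, dist_add_left]
    calc ENNReal.ofReal (∑ i : Fin n,
          max (dist ((fun t => f t + h t) (t i.succ)) ((fun t => f t + h t) (t i.castSucc))
            - δ) 0)
        = ENNReal.ofReal (∑ i : Fin n, max (dist (h (t i.succ)) (h (t i.castSucc)) - δ) 0) := by
          congr 1; exact Finset.sum_congr rfl fun i _ => by rw [hsum i]
      _ ≤ truncVar h a b δ := ofReal_partial_le_truncVar h a b δ t hmono hmem
  exact le_trans (mul_le_mul_right h1 _) (mul_truncVar_le_pTVsup h a b p hδ)

end Aux

theorem stmt_13 {W : Type*} [NormedAddCommGroup W] [NormedSpace ℝ W] [CompleteSpace W]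
    (a b p : ℝ) (hab : a < b) (hp : 1 ≤ p) (f h : ℝ → W)
    (hf : pTVsup f a b p < ⊤) (hh : pTVsup h a b p < ⊤) :
    pTVnorm (fun t => f t + h t) a b p ≤ pTVnorm f a b p + pTVnorm h a b p := by
  have hp0 : 0 < p := lt_of_lt_of_le one_pos hp
  have hip : 0 ≤ 1 / p := by positivity
  by_cases hf0 : pTVsup f a b p = 0
  · have hle := pTVsup_add_le_of_left_zero f h a b p hf0
    calc pTVnorm (fun t => f t + h t) a b p ≤ pTVnorm h a b p :=
          ENNReal.rpow_le_rpow hle hip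
      _ ≤ pTVnorm f a b p + pTVnorm h a b p := le_add_self
  by_cases hh0 : pTVsup h a b p = 0
  · have heq : (fun t => f t + h t) = (fun t => h t + f t) := by
      funext t; exact add_comm _ _
    have hle := pTVsup_add_le_of_left_zero h f a b p hh0
    rw [heq] at *
    calc pTVnorm (fun t => h t + f t) a b p ≤ pTVnorm f a b p :=
          ENNReal.rpow_le_rpow hle hip
      _ ≤ pTVnorm f a b p + pTVnorm h a b p := self_le_add_right _ _
  -- main case
  set Sf := pTVsup f a b p with hSf
  set Sh := pTVsup h a b p with hSh
  have haf : 0 < Sf.toReal := ENNReal.toReal_pos hf0 hf.ne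
  have hah : 0 < Sh.toReal := ENNReal.toReal_pos hh0 hh.ne
  set A := Sf.toReal ^ (1 / p) with hA
  set B := Sh.toReal ^ (1 / p) with hB
  have hApos : 0 < A := Real.rpow_pos_of_pos haf _
  have hBpos : 0 < B := Real.rpow_pos_of_pos hah _
  have hABpos : 0 < A + B := by linarith
  set lam := A / (A + B) with hlam
  set mu := B / (A + B) with hmu
  have hlampos : 0 < lam := div_pos hApos hABpos
  have hmupos : 0 < mu := div_pos hBpos hABpos
  have hsum : lam + mu = 1 := by
    rw [hlam, hmu, ← add_div, div_self hABpos.ne']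
  have hAp : A ^ p = Sf.toReal := by
    rw [hA, ← Real.rpow_mul haf.le, one_div_mul_cancel hp0.ne', Real.rpow_one]
  have hBp : B ^ p = Sh.toReal := by
    rw [hB, ← Real.rpow_mul hah.le, one_div_mul_cancel hp0.ne', Real.rpow_one]
  have hterm : ∀ X : ℝ, 0 < X → (X / (A + B)) ^ (1 - p) * X ^ p = X * (A + B) ^ (p - 1) := by
    intro X hX
    rw [Real.div_rpow hX.le hABpos.le, div_mul_eq_mul_div, div_eq_mul_inv,
      ← Real.rpow_add hX, ← Real.rpow_neg hABpos.le]
    rw [show (1 - p) + p = (1 : ℝ) by ring, show -(1 - p) = p - 1 by ring, Real.rpow_one]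
  have hmain : pTVsup (fun t => f t + h t) a b p ≤ ENNReal.ofReal ((A + B) ^ p) := by
    refine (pTVsup_add_le f h a b p hlampos hmupos hsum).trans ?_
    have e1 : ENNReal.ofReal (lam ^ (1 - p)) * Sf
        = ENNReal.ofReal (A * (A + B) ^ (p - 1)) := by
      rw [← ENNReal.ofReal_toReal hf.ne, ← ENNReal.ofReal_mul (Real.rpow_nonneg hlampos.le _)]
      congr 1
      rw [← hAp, hlam]
      exact hterm A hApos
    have e2 : ENNReal.ofReal (mu ^ (1 - p)) * Sh
        = ENNReal.ofReal (B * (A + B) ^ (p - 1)) := by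
      rw [← ENNReal.ofReal_toReal hh.ne, ← ENNReal.ofReal_mul (Real.rpow_nonneg hmupos.le _)]
      congr 1
      rw [← hBp, hmu]
      exact hterm B hBpos
    rw [e1, e2, ← ENNReal.ofReal_add (by positivity) (by positivity), ← add_mul]
    apply ENNReal.ofReal_le_ofReal
    nth_rewrite 1 [show A + B = (A + B) ^ (1 : ℝ) from (Real.rpow_one _).symm]
    rw [← Real.rpow_add hABpos]
    rw [show (1 : ℝ) + (p - 1) = p by ring]
  have hfn : pTVnorm f a b p = ENNReal.ofReal A := by
    rw [pTVnorm, ← hSf, ← ENNReal.ofReal_toReal hf.ne,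
      ENNReal.ofReal_rpow_of_nonneg haf.le hip, hA]
  have hhn : pTVnorm h a b p = ENNReal.ofReal B := by
    rw [pTVnorm, ← hSh, ← ENNReal.ofReal_toReal hh.ne,
      ENNReal.ofReal_rpow_of_nonneg hah.le hip, hB]
  calc pTVnorm (fun t => f t + h t) a b p
      ≤ ENNReal.ofReal ((A + B) ^ p) ^ (1 / p) := ENNReal.rpow_le_rpow hmain hip
    _ = ENNReal.ofReal (A + B) := by
        rw [ENNReal.ofReal_rpow_of_nonneg (by positivity) hip, ← Real.rpow_mul hABpos.le,
          mul_one_div, div_self hp0.ne', Real.rpow_one]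
    _ = ENNReal.ofReal A + ENNReal.ofReal B := ENNReal.ofReal_add hApos.le hBpos.le
    _ = pTVnorm f a b p + pTVnorm h a b p := by rw [hfn, hhn]
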